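/- Let P be a row-stochastic matrix on a finite nonempty set S whose ergodicity coefficient satisfies λ_P ≤ λ* for some λ* < 1, let r : S → ℝ with 0 ≤ r(s) ≤ M for all s, let ξ be a stationary probability distribution of P (i.e., ∑_{s∈S} ξ(s) P(z|s) = ξ(z) for all z), and set J = ∑_{s∈S} ξ(s) r(s). Then (i) 0 ≤ J ≤ M; (ii) for each s ∈ S the series V(s) = ∑_{t=0}^∞ ((P^t r)(s) − J) converges absolutely; and (iii) span(V) ≤ 2M/(1 − λ*). -/

import Mathlib

/-- For `f : S → ℝ` on a finite nonempty set `S`, the span is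
`max f - min f`. -/
noncomputable def fnSpan {S : Type*} [Fintype S] [Nonempty S] (f : S → ℝ) : ℝ :=
  Finset.univ.sup' Finset.univ_nonempty f - Finset.univ.inf' Finset.univ_nonempty f

/-- The ergodicity (Dobrushin) coefficient of a row-stochastic matrix `P`
(where `P s z` is the probability of moving from `s` to `z`):
`λ_P = 1 − min_{s,s'} ∑_z min(P(z|s), P(z|s'))`. -/
noncomputable def ergCoeff {S : Type*} [Fintype S] [Nonempty S] (P : S → S → ℝ) : ℝ :=
  1 - Finset.univ.inf' Finset.univ_nonempty
        (fun ss : S × S => ∑ z, min (P ss.1 z) (P ss.2 z))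

/-- The action of a transition matrix `P` on a function `v : S → ℝ`:
`(Pv)(s) = ∑_z P(z|s) v(z)`. -/
noncomputable def matApply {S : Type*} [Fintype S] (P : S → S → ℝ) (v : S → ℝ) : S → ℝ :=
  fun s => ∑ z, P s z * v z

section Aux

variable {S : Type*} [Fintype S] [Nonempty S]

lemma sub_le_fnSpan (f : S → ℝ) (s s' : S) : f s - f s' ≤ fnSpan f := by
  have h1 : f s ≤ Finset.univ.sup' Finset.univ_nonempty f :=
    Finset.le_sup' f (Finset.mem_univ s)
  have h2 : Finset.univ.inf' Finset.univ_nonempty f ≤ f s' :=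
    Finset.inf'_le f (Finset.mem_univ s')
  unfold fnSpan; linarith

lemma fnSpan_nonneg (f : S → ℝ) : 0 ≤ fnSpan f := by
  obtain ⟨s⟩ := ‹Nonempty S›
  have := sub_le_fnSpan f s s
  linarith

lemma key_contract (P : S → S → ℝ) (hP0 : ∀ s z, 0 ≤ P s z) (hP1 : ∀ s, ∑ z, P s z = 1)
    (v : S → ℝ) (s s' : S) :
    matApply P v s - matApply P v s' ≤ (1 - ∑ z, min (P s z) (P s' z)) * fnSpan v := by
  set m : S → ℝ := fun z => min (P s z) (P s' z) with hm
  set Sup : ℝ := Finset.univ.sup' Finset.univ_nonempty v with hSup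
  set Inf : ℝ := Finset.univ.inf' Finset.univ_nonempty v with hInf
  have hvS : ∀ z, v z ≤ Sup := fun z => Finset.le_sup' v (Finset.mem_univ z)
  have hvI : ∀ z, Inf ≤ v z := fun z => Finset.inf'_le v (Finset.mem_univ z)
  have hms : ∀ z, m z ≤ P s z := fun z => min_le_left _ _
  have hms' : ∀ z, m z ≤ P s' z := fun z => min_le_right _ _
  have A : ∑ z, (P s z - m z) * v z ≤ (1 - ∑ z, m z) * Sup := by
    calc ∑ z, (P s z - m z) * v z ≤ ∑ z, (P s z - m z) * Sup := by
          apply Finset.sum_le_sum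
          intro z _
          exact mul_le_mul_of_nonneg_left (hvS z) (by linarith [hms z])
      _ = (1 - ∑ z, m z) * Sup := by
          rw [← Finset.sum_mul, Finset.sum_sub_distrib, hP1]
  have B : (1 - ∑ z, m z) * Inf ≤ ∑ z, (P s' z - m z) * v z := by
    calc (1 - ∑ z, m z) * Inf = ∑ z, (P s' z - m z) * Inf := by
          rw [← Finset.sum_mul, Finset.sum_sub_distrib, hP1]
      _ ≤ ∑ z, (P s' z - m z) * v z := by
          apply Finset.sum_le_sum
          intro z _
          exact mul_le_mul_of_nonneg_left (hvI z) (by linarith [hms' z])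
  have C : matApply P v s - matApply P v s'
      = (∑ z, (P s z - m z) * v z) - ∑ z, (P s' z - m z) * v z := by
    simp only [matApply, sub_mul, Finset.sum_sub_distrib]
    ring
  have D : (1 - ∑ z, m z) * fnSpan v = (1 - ∑ z, m z) * Sup - (1 - ∑ z, m z) * Inf := by
    rw [fnSpan, mul_sub]
  linarith

lemma span_contract (P : S → S → ℝ) (hP0 : ∀ s z, 0 ≤ P s z) (hP1 : ∀ s, ∑ z, P s z = 1)
    (lamStar : ℝ) (hlam : ergCoeff P ≤ lamStar) (v : S → ℝ) :
    fnSpan (matApply P v) ≤ lamStar * fnSpan v := by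
  have hpair : ∀ s s' : S, matApply P v s - matApply P v s' ≤ lamStar * fnSpan v := by
    intro s s'
    have h1 := key_contract P hP0 hP1 v s s'
    have h2 : Finset.univ.inf' Finset.univ_nonempty
        (fun ss : S × S => ∑ z, min (P ss.1 z) (P ss.2 z)) ≤ ∑ z, min (P s z) (P s' z) :=
      Finset.inf'_le _ (Finset.mem_univ (s, s'))
    have h3 : (1 - ∑ z, min (P s z) (P s' z)) ≤ lamStar := by
      have : (1 - ∑ z, min (P s z) (P s' z)) ≤ ergCoeff P := by unfold ergCoeff; linarith
      linarith
    calc matApply P v s - matApply P v s' ≤ (1 - ∑ z, min (P s z) (P s' z)) * fnSpan v := h1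
      _ ≤ lamStar * fnSpan v := mul_le_mul_of_nonneg_right h3 (fnSpan_nonneg v)
  obtain ⟨s, _, hs⟩ := Finset.exists_mem_eq_sup' Finset.univ_nonempty (matApply P v)
  obtain ⟨s', _, hs'⟩ := Finset.exists_mem_eq_inf' Finset.univ_nonempty (matApply P v)
  rw [fnSpan, hs, hs']
  exact hpair s s'

lemma ergCoeff_nonneg (P : S → S → ℝ) (hP0 : ∀ s z, 0 ≤ P s z)
    (hP1 : ∀ s, ∑ z, P s z = 1) : 0 ≤ ergCoeff P := by
  obtain ⟨s⟩ := ‹Nonempty S›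
  have h : Finset.univ.inf' Finset.univ_nonempty
      (fun ss : S × S => ∑ z, min (P ss.1 z) (P ss.2 z)) ≤ ∑ z, min (P s z) (P s z) :=
    Finset.inf'_le _ (Finset.mem_univ (s, s))
  simp only [min_self] at h
  rw [hP1 s] at h
  unfold ergCoeff; linarith

end Aux

/-- Lemma 1 of the paper: for a row-stochastic matrix `P` with ergodicity
coefficient `λ_P ≤ λ* < 1`, a reward `r` with `0 ≤ r ≤ M`, a stationary
distribution `ξ` of `P` and `J = ∑_s ξ(s) r(s)`:
(i) `0 ≤ J ≤ M`; (ii) the series `V(s) = ∑_t ((P^t r)(s) − J)` converges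
absolutely; (iii) `span(V) ≤ 2M/(1 − λ*)`. -/
theorem stmt3 {S : Type*} [Fintype S] [Nonempty S]
    (P : S → S → ℝ)
    (hP0 : ∀ s z, 0 ≤ P s z) (hP1 : ∀ s, ∑ z, P s z = 1)
    (lamStar : ℝ) (hlam : ergCoeff P ≤ lamStar) (hlam1 : lamStar < 1)
    (r : S → ℝ) (M : ℝ) (hr0 : ∀ s, 0 ≤ r s) (hrM : ∀ s, r s ≤ M)
    (ξ : S → ℝ) (hξ0 : ∀ s, 0 ≤ ξ s) (hξ1 : ∑ s, ξ s = 1)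
    (hstat : ∀ z, ∑ s, ξ s * P s z = ξ z)
    (J : ℝ) (hJ : J = ∑ s, ξ s * r s) :
    (0 ≤ J ∧ J ≤ M) ∧
    (∀ s, Summable (fun t : ℕ => |(matApply P)^[t] r s - J|)) ∧
    fnSpan (fun s => ∑' t : ℕ, ((matApply P)^[t] r s - J)) ≤ 2 * M / (1 - lamStar) := by
  obtain ⟨s₀⟩ := ‹Nonempty S›
  have hM0 : 0 ≤ M := le_trans (hr0 s₀) (hrM s₀)
  have hlam0 : 0 ≤ lamStar := le_trans (ergCoeff_nonneg P hP0 hP1) hlam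
  -- (i)
  have hJ0 : 0 ≤ J := by
    rw [hJ]
    exact Finset.sum_nonneg fun s _ => mul_nonneg (hξ0 s) (hr0 s)
  have hJM : J ≤ M := by
    rw [hJ]
    calc ∑ s, ξ s * r s ≤ ∑ s, ξ s * M :=
          Finset.sum_le_sum fun s _ => mul_le_mul_of_nonneg_left (hrM s) (hξ0 s)
      _ = M := by rw [← Finset.sum_mul, hξ1, one_mul]
  -- invariance of ξ-average
  have hinv : ∀ v : S → ℝ, ∑ s, ξ s * matApply P v s = ∑ z, ξ z * v z := by
    intro v
    simp only [matApply, Finset.mul_sum]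
    rw [Finset.sum_comm]
    refine Finset.sum_congr rfl fun z _ => ?_
    rw [← hstat z, Finset.sum_mul]
    exact Finset.sum_congr rfl fun s _ => by ring
  -- ξ-average of iterates equals J
  have hJt : ∀ t : ℕ, ∑ s, ξ s * (matApply P)^[t] r s = J := by
    intro t
    induction t with
    | zero => simpa using hJ.symm
    | succ n ih =>
      rw [Function.iterate_succ_apply']
      rw [hinv ((matApply P)^[n] r)]
      exact ih
  -- span of iterates
  have hspan_r : fnSpan r ≤ M := by
    have h1 : Finset.univ.sup' Finset.univ_nonempty r ≤ M :=
      Finset.sup'_le _ _ fun s _ => hrM s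
    have h2 : (0:ℝ) ≤ Finset.univ.inf' Finset.univ_nonempty r :=
      Finset.le_inf' _ _ fun s _ => hr0 s
    unfold fnSpan; linarith
  have hspan_t : ∀ t : ℕ, fnSpan ((matApply P)^[t] r) ≤ M * lamStar ^ t := by
    intro t
    induction t with
    | zero => simpa using hspan_r
    | succ n ih =>
      rw [Function.iterate_succ_apply']
      calc fnSpan (matApply P ((matApply P)^[n] r))
          ≤ lamStar * fnSpan ((matApply P)^[n] r) := span_contract P hP0 hP1 lamStar hlam _
        _ ≤ lamStar * (M * lamStar ^ n) := mul_le_mul_of_nonneg_left ih hlam0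
        _ = M * lamStar ^ (n + 1) := by ring
  -- J is between min and max of each iterate
  have hJbetween : ∀ (t : ℕ) (s : S), |(matApply P)^[t] r s - J| ≤ M * lamStar ^ t := by
    intro t s
    set v := (matApply P)^[t] r with hv
    have hle : J ≤ Finset.univ.sup' Finset.univ_nonempty v := by
      rw [← hJt t]
      calc ∑ s, ξ s * v s ≤ ∑ s, ξ s * Finset.univ.sup' Finset.univ_nonempty v :=
            Finset.sum_le_sum fun z _ =>
              mul_le_mul_of_nonneg_left (Finset.le_sup' v (Finset.mem_univ z)) (hξ0 z)
        _ = _ := by rw [← Finset.sum_mul, hξ1, one_mul]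
    have hge : Finset.univ.inf' Finset.univ_nonempty v ≤ J := by
      rw [← hJt t]
      calc Finset.univ.inf' Finset.univ_nonempty v
          = ∑ s, ξ s * Finset.univ.inf' Finset.univ_nonempty v := by
            rw [← Finset.sum_mul, hξ1, one_mul]
        _ ≤ ∑ s, ξ s * v s :=
            Finset.sum_le_sum fun z _ =>
              mul_le_mul_of_nonneg_left (Finset.inf'_le v (Finset.mem_univ z)) (hξ0 z)
    have h1 : v s ≤ Finset.univ.sup' Finset.univ_nonempty v :=
      Finset.le_sup' v (Finset.mem_univ s)
    have h2 : Finset.univ.inf' Finset.univ_nonempty v ≤ v s :=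
      Finset.inf'_le v (Finset.mem_univ s)
    have hsp := hspan_t t
    rw [← hv] at hsp
    rw [abs_le]
    unfold fnSpan at hsp
    constructor <;> linarith
  have hgeom : Summable (fun t : ℕ => M * lamStar ^ t) :=
    (summable_geometric_of_lt_one hlam0 hlam1).mul_left M
  have hsum : ∀ s, Summable (fun t : ℕ => |(matApply P)^[t] r s - J|) := by
    intro s
    exact Summable.of_nonneg_of_le (fun t => abs_nonneg _) (fun t => hJbetween t s) hgeom
  have hsum' : ∀ s, Summable (fun t : ℕ => (matApply P)^[t] r s - J) :=
    fun s => (hsum s).of_abs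
  refine ⟨⟨hJ0, hJM⟩, hsum, ?_⟩
  -- (iii)
  set V : S → ℝ := fun s => ∑' t : ℕ, ((matApply P)^[t] r s - J) with hV
  have hVdiff : ∀ s s' : S, V s - V s' ≤ M * (1 - lamStar)⁻¹ := by
    intro s s'
    have heq : V s - V s' = ∑' t : ℕ, ((matApply P)^[t] r s - (matApply P)^[t] r s') := by
      rw [hV, ← Summable.tsum_sub (hsum' s) (hsum' s')]
      congr 1
      funext t
      ring
    rw [heq]
    have hle : ∀ t : ℕ, (matApply P)^[t] r s - (matApply P)^[t] r s' ≤ M * lamStar ^ t := by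
      intro t
      exact le_trans (sub_le_fnSpan _ s s') (hspan_t t)
    have hsummable : Summable (fun t : ℕ => (matApply P)^[t] r s - (matApply P)^[t] r s') := by
      have := (hsum' s).sub (hsum' s')
      exact this.congr (fun t => by ring)
    calc ∑' t : ℕ, ((matApply P)^[t] r s - (matApply P)^[t] r s')
        ≤ ∑' t : ℕ, M * lamStar ^ t := Summable.tsum_le_tsum hle hsummable hgeom
      _ = M * (1 - lamStar)⁻¹ := by
          rw [tsum_mul_left, tsum_geometric_of_lt_one hlam0 hlam1]
  obtain ⟨s, _, hs⟩ := Finset.exists_mem_eq_sup' (Finset.univ_nonempty (α := S)) V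
  obtain ⟨s', _, hs'⟩ := Finset.exists_mem_eq_inf' (Finset.univ_nonempty (α := S)) V
  have : fnSpan V = V s - V s' := by rw [fnSpan, hs, hs']
  rw [hV] at this
  rw [this]
  calc V s - V s' ≤ M * (1 - lamStar)⁻¹ := hVdiff s s'
    _ ≤ 2 * M * (1 - lamStar)⁻¹ := by
        apply mul_le_mul_of_nonneg_right (by linarith) (inv_nonneg.mpr (by linarith))
    _ = 2 * M / (1 - lamStar) := by rw [div_eq_mul_inv]
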